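/- arXiv:2305.15547 — 2 statements merged into one kernel-verified Lean document; each statement's English description precedes it below -/
import Mathlib

section
/- Work with N spin-1/2 particles in the matrix algebra M_N, with bath dissipator D_bath[X] := ∑_k (Γ↓ W_{σ₋^{(k)}}[X] + Γ↑ W_{σ₊^{(k)}}[X]). Then D_bath[S₋] = −((Γ↓ + Γ↑)/2) · S₋, where S₋ := ∑_k σ₋^{(k)}. -/
open Matrix

/-- The Pauli lowering operator `σ₋`. -/
def σm : Matrix (Fin 2) (Fin 2) ℂ := !![0, 0; 1, 0]

/-- The Pauli raising operator `σ₊`. -/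
def σp : Matrix (Fin 2) (Fin 2) ℂ := !![0, 1; 0, 0]

/-- The Pauli matrix `σ_z`. -/
def σz : Matrix (Fin 2) (Fin 2) ℂ := !![1, 0; 0, -1]

/-- Embedding of a single-spin operator `m` at site `k` of an `N`-spin system:
`m^{(k)} f g = m (f k) (g k)` if `f j = g j` for all `j ≠ k`, and `0` otherwise. -/
def embed {N : ℕ} (m : Matrix (Fin 2) (Fin 2) ℂ) (k : Fin N) :
    Matrix (Fin N → Fin 2) (Fin N → Fin 2) ℂ :=
  fun f g => if ∀ j, j ≠ k → f j = g j then m (f k) (g k) else 0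

/-- The collective lowering operator `S₋ = ∑ₖ σ₋^{(k)}`. -/
noncomputable def Sminus (N : ℕ) : Matrix (Fin N → Fin 2) (Fin N → Fin 2) ℂ := ∑ k, embed σm k

/-- The collective raising operator `S₊ = ∑ₖ σ₊^{(k)}`. -/
noncomputable def Splus (N : ℕ) : Matrix (Fin N → Fin 2) (Fin N → Fin 2) ℂ := ∑ k, embed σp k

/-- The collective operator `S_z = ∑ₖ σ_z^{(k)}`. -/
noncomputable def Sz (N : ℕ) : Matrix (Fin N → Fin 2) (Fin N → Fin 2) ℂ := ∑ k, embed σz k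

/-- The Heisenberg-picture jump map `W_ν[X] = νᴴ X ν - (νᴴ ν X + X νᴴ ν)/2` on the
`N`-spin algebra. -/
noncomputable def WmapN {N : ℕ} (ν X : Matrix (Fin N → Fin 2) (Fin N → Fin 2) ℂ) :
    Matrix (Fin N → Fin 2) (Fin N → Fin 2) ℂ :=
  νᴴ * X * ν - (2 : ℂ)⁻¹ • (νᴴ * ν * X + X * (νᴴ * ν))

/-- The bath dissipator `D_bath[X] = ∑ₖ (Γ↓ W_{σ₋^{(k)}}[X] + Γ↑ W_{σ₊^{(k)}}[X])`. -/
noncomputable def Dbath (N : ℕ) (Γd Γu : ℝ)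
    (X : Matrix (Fin N → Fin 2) (Fin N → Fin 2) ℂ) :
    Matrix (Fin N → Fin 2) (Fin N → Fin 2) ℂ :=
  ∑ k, ((Γd : ℂ) • WmapN (embed σm k) X + (Γu : ℂ) • WmapN (embed σp k) X)

variable {N : ℕ}

lemma sum_eq_sum_update (k : Fin N) (f : Fin N → Fin 2) (F : (Fin N → Fin 2) → ℂ)
    (hF : ∀ h, ¬(∀ j, j ≠ k → f j = h j) → F h = 0) :
    ∑ h, F h = ∑ i : Fin 2, F (Function.update f k i) := by
  classical
  rw [← Finset.sum_filter_of_ne (p := fun h => ∀ j, j ≠ k → f j = h j)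
    (fun h _ hne => by by_contra hc; exact hne (hF h hc))]
  refine Finset.sum_nbij' (fun h => h k) (fun i => Function.update f k i) ?_ ?_ ?_ ?_ ?_
  · intro a _; exact Finset.mem_univ _
  · intro i _
    simp only [Finset.mem_filter, Finset.mem_univ, true_and]
    intro j hj; rw [Function.update_of_ne hj]
  · intro h hh
    simp only [Finset.mem_filter, Finset.mem_univ, true_and] at hh
    funext j
    by_cases hj : j = k
    · subst hj; simp
    · rw [Function.update_of_ne hj]; exact hh j hj
  · intro i _; simp
  · intro h hh
    simp only [Finset.mem_filter, Finset.mem_univ, true_and] at hh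
    congr 1
    funext j
    by_cases hj : j = k
    · subst hj; simp
    · rw [Function.update_of_ne hj]; exact (hh j hj).symm

lemma embed_mul (m m' : Matrix (Fin 2) (Fin 2) ℂ) (k : Fin N) :
    embed m k * embed m' k = embed (m * m') k := by
  classical
  ext f g
  rw [mul_apply]
  rw [sum_eq_sum_update k f _ (fun h hh => by simp only [embed, if_neg hh, zero_mul])]
  have h1 : ∀ i : Fin 2, (∀ j, j ≠ k → f j = Function.update f k i j) :=
    fun i j hj => (Function.update_of_ne hj _ _).symm
  have h2 : ∀ i : Fin 2, (∀ j, j ≠ k → Function.update f k i j = g j) ↔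
      (∀ j, j ≠ k → f j = g j) := by
    intro i
    constructor <;> intro h j hj
    · rw [← h j hj, Function.update_of_ne hj]
    · rw [Function.update_of_ne hj]; exact h j hj
  simp only [embed, Function.update_self, if_pos (h1 _), h2]
  by_cases hC : ∀ j, j ≠ k → f j = g j
  · simp [hC, mul_apply]
  · simp [hC]

lemma embed_mul_apply_ne (m m' : Matrix (Fin 2) (Fin 2) ℂ) (k j : Fin N) (hjk : j ≠ k)
    (f g : Fin N → Fin 2) :
    (embed m k * embed m' j) f g =
      if ∀ l, l ≠ k → l ≠ j → f l = g l then m (f k) (g k) * m' (f j) (g j) else 0 := by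
  classical
  rw [mul_apply]
  rw [sum_eq_sum_update k f _ (fun h hh => by simp only [embed, if_neg hh, zero_mul])]
  have h1 : ∀ i : Fin 2, (∀ l, l ≠ k → f l = Function.update f k i l) :=
    fun i l hl => (Function.update_of_ne hl _ _).symm
  have h3 : ∀ i : Fin 2, (∀ l, l ≠ j → Function.update f k i l = g l) ↔
      (i = g k ∧ ∀ l, l ≠ k → l ≠ j → f l = g l) := by
    intro i
    constructor
    · intro h
      refine ⟨?_, fun l hlk hlj => ?_⟩
      · have := h k (Ne.symm hjk); rwa [Function.update_self] at this
      · have := h l hlj; rwa [Function.update_of_ne hlk] at this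
    · rintro ⟨hi, hQ⟩ l hl
      by_cases hlk : l = k
      · subst hlk; rwa [Function.update_self]
      · rw [Function.update_of_ne hlk]; exact hQ l hlk hl
  simp only [embed, Function.update_self, if_pos (h1 _), h3,
    Function.update_of_ne hjk]
  by_cases hQ : ∀ l, l ≠ k → l ≠ j → f l = g l
  · have h4 : ∀ i : Fin 2, (i = g k ∧ ∀ l, l ≠ k → l ≠ j → f l = g l) ↔ i = g k :=
      fun i => and_iff_left hQ
    simp only [h4, if_pos hQ, mul_ite, mul_zero]
    rw [Finset.sum_ite_eq' Finset.univ (g k) (fun i => m (f k) i * m' (f j) (g j))]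
    simp
  · have h4 : ∀ i : Fin 2, ¬(i = g k ∧ ∀ l, l ≠ k → l ≠ j → f l = g l) :=
      fun i hi => hQ hi.2
    simp [h4, hQ]

lemma embed_comm (m m' : Matrix (Fin 2) (Fin 2) ℂ) (k j : Fin N) (hjk : j ≠ k) :
    embed m k * embed m' j = embed m' j * embed m k := by
  ext f g
  rw [embed_mul_apply_ne m m' k j hjk, embed_mul_apply_ne m' m j k (Ne.symm hjk)]
  have : (∀ l, l ≠ k → l ≠ j → f l = g l) ↔ (∀ l, l ≠ j → l ≠ k → f l = g l) := by
    constructor <;> (intro h l h1 h2; exact h l h2 h1)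
  simp only [this]
  split <;> [ring; rfl]

lemma embed_conjTranspose (m : Matrix (Fin 2) (Fin 2) ℂ) (k : Fin N) :
    (embed m k)ᴴ = embed mᴴ k := by
  ext f g
  simp only [conjTranspose_apply, embed]
  have : (∀ j, j ≠ k → g j = f j) ↔ (∀ j, j ≠ k → f j = g j) :=
    forall_congr' fun j => forall_congr' fun _ => eq_comm
  simp only [this, apply_ite star]
  simp

lemma embed_add (m m' : Matrix (Fin 2) (Fin 2) ℂ) (k : Fin N) :
    embed (m + m') k = embed m k + embed m' k := by
  ext f g; simp only [embed, Matrix.add_apply]; split <;> simp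

lemma embed_sub (m m' : Matrix (Fin 2) (Fin 2) ℂ) (k : Fin N) :
    embed (m - m') k = embed m k - embed m' k := by
  ext f g; simp only [embed, Matrix.sub_apply]; split <;> simp

lemma embed_smul (a : ℂ) (m : Matrix (Fin 2) (Fin 2) ℂ) (k : Fin N) :
    embed (a • m) k = a • embed m k := by
  ext f g; simp only [embed, Matrix.smul_apply]; split <;> simp

lemma WmapN_embed_Sminus (ν : Matrix (Fin 2) (Fin 2) ℂ) (k : Fin N) :
    WmapN (embed ν k) (Sminus N) =
      embed (νᴴ * σm * ν - (2 : ℂ)⁻¹ • (νᴴ * ν * σm + σm * (νᴴ * ν))) k := by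
  unfold WmapN Sminus
  rw [embed_conjTranspose]
  rw [Finset.mul_sum, Finset.sum_mul, Finset.mul_sum, Finset.sum_mul, ← Finset.sum_add_distrib,
    Finset.smul_sum, ← Finset.sum_sub_distrib]
  rw [Finset.sum_eq_single_of_mem k (Finset.mem_univ k)]
  · simp only [embed_mul]
    rw [← embed_add, ← embed_smul, ← embed_sub]
  · intro j _ hjk
    have e1 : embed νᴴ k * embed σm j * embed ν k = embed σm j * embed (νᴴ * ν) k := by
      rw [embed_comm νᴴ σm k j hjk, mul_assoc, embed_mul]
    have e2 : embed νᴴ k * embed ν k * embed σm j = embed σm j * embed (νᴴ * ν) k := by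
      rw [embed_mul, embed_comm _ σm k j hjk]
    have e3 : embed σm j * (embed νᴴ k * embed ν k) = embed σm j * embed (νᴴ * ν) k := by
      rw [embed_mul]
    rw [e1, e2, e3, ← two_smul ℂ, smul_smul, inv_mul_cancel₀ two_ne_zero, one_smul, sub_self]

lemma sm_ct : σmᴴ = σp := by
  ext i j; fin_cases i <;> fin_cases j <;> simp [σm, σp]

lemma sp_ct : σpᴴ = σm := by
  ext i j; fin_cases i <;> fin_cases j <;> simp [σm, σp]

lemma W2_sm : σmᴴ * σm * σm - (2:ℂ)⁻¹ • (σmᴴ * σm * σm + σm * (σmᴴ * σm)) = (-(2:ℂ)⁻¹) • σm := by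
  rw [sm_ct]
  ext i j
  fin_cases i <;> fin_cases j <;>
    simp [σm, σp, mul_apply, Fin.sum_univ_two]

lemma W2_sp : σpᴴ * σm * σp - (2:ℂ)⁻¹ • (σpᴴ * σp * σm + σm * (σpᴴ * σp)) = (-(2:ℂ)⁻¹) • σm := by
  rw [sp_ct]
  ext i j
  fin_cases i <;> fin_cases j <;>
    simp [σm, σp, mul_apply, Fin.sum_univ_two]

/-- `D_bath[S₋] = -((Γ↓ + Γ↑)/2) S₋`. -/
theorem dbath_Sminus (N : ℕ) (Γd Γu : ℝ) :
    Dbath N Γd Γu (Sminus N) = -(((Γd + Γu) / 2 : ℝ) : ℂ) • Sminus N := by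
  unfold Dbath
  simp only [WmapN_embed_Sminus, W2_sm, W2_sp, embed_smul]
  rw [Sminus, Finset.smul_sum]
  refine Finset.sum_congr rfl fun k _ => ?_
  rw [smul_smul, smul_smul, ← add_smul]
  congr 1
  push_cast
  ring
end

section
/- Let A be an associative unital algebra over ℂ and let a, b ∈ A satisfy a*b − b*a = 1. For κ↓, κ↑ ∈ ℂ define D̃[X] := κ↓·(b*X*a − (b*a*X + X*b*a)/2) + κ↑·(a*X*b − (a*b*X + X*a*b)/2). Then for all natural numbers m, n: D̃[bᵐ * aⁿ] = −((κ↓ − κ↑)·(m + n)/2) · bᵐ * aⁿ + κ↑ · (m·n) · b^(m−1) * a^(n−1), where the last term is understood to vanish when m = 0 or n = 0 (its coefficient m·n is then zero). -/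
section
variable {A : Type*} [Ring A] [Algebra ℂ A]

private lemma trunc_mul (b : A) (k : ℕ) : (k:ℂ) • (b ^ (k-1) * b) = (k:ℂ) • b ^ k := by
  cases k with
  | zero => simp
  | succ j => simp [pow_succ]

private lemma trunc_mul' (b : A) (k : ℕ) : (k:ℂ) • (b * b ^ (k-1)) = (k:ℂ) • b ^ k := by
  cases k with
  | zero => simp
  | succ j => simp [pow_succ']

private lemma key1 (a b : A) (hab : a * b - b * a = 1) (m : ℕ) :
    a * b ^ m = b ^ m * a + (m:ℂ) • b ^ (m-1) := by
  have hab' : a * b = b * a + 1 := by linear_combination (norm := noncomm_ring) hab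
  induction m with
  | zero => simp
  | succ k ih =>
    rw [pow_succ, ← mul_assoc, ih, add_mul, mul_assoc, hab', smul_mul_assoc,
      trunc_mul, Nat.succ_sub_one]
    push_cast
    rw [mul_add, mul_one, ← mul_assoc, ← pow_succ, add_smul, one_smul]
    abel

private lemma key2 (a b : A) (hab : a * b - b * a = 1) (n : ℕ) :
    a ^ n * b = b * a ^ n + (n:ℂ) • a ^ (n-1) := by
  have hab' : a * b = b * a + 1 := by linear_combination (norm := noncomm_ring) hab
  induction n with
  | zero => simp
  | succ k ih =>
    rw [pow_succ', mul_assoc, ih, mul_add, ← mul_assoc, hab', mul_smul_comm,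
      trunc_mul', Nat.succ_sub_one]
    push_cast
    rw [add_mul, one_mul, mul_assoc, ← pow_succ', add_smul, one_smul]
    abel

end

/-- Action of the emergent bosonic dissipator `D̃ = κ↓ W_a + κ↑ W_b` (with `b` playing
the role of the creation operator, `[a, b] = 1`) on normal-ordered monomials:
`D̃[bᵐ aⁿ] = -((κ↓ - κ↑)(m + n)/2) bᵐ aⁿ + κ↑ m n b^{m-1} a^{n-1}`. -/
theorem bosonic_dissipator_monomials {A : Type*} [Ring A] [Algebra ℂ A]
    (a b : A) (hab : a * b - b * a = 1) (κd κu : ℂ) (D : A → A)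
    (hD : ∀ X, D X = κd • (b * X * a - (2 : ℂ)⁻¹ • (b * a * X + X * (b * a)))
                   + κu • (a * X * b - (2 : ℂ)⁻¹ • (a * b * X + X * (a * b))))
    (m n : ℕ) :
    D (b ^ m * a ^ n)
      = (-((κd - κu) * ((m : ℂ) + (n : ℂ)) / 2)) • (b ^ m * a ^ n)
        + (κu * ((m : ℂ) * (n : ℂ))) • (b ^ (m - 1) * a ^ (n - 1)) := by
  have hab' : a * b = b * a + 1 := by linear_combination (norm := noncomm_ring) hab
  set T1 : A := b ^ (m+1) * a ^ (n+1) with hT1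
  set T2 : A := b ^ m * a ^ n with hT2
  set T3 : A := b ^ (m-1) * a ^ (n-1) with hT3
  have h1 : b * (b ^ m * a ^ n) * a = T1 := by
    rw [hT1]; simp only [pow_succ' b, pow_succ a, mul_assoc]
  have h2 : b * a * (b ^ m * a ^ n) = T1 + (m:ℂ) • T2 := by
    have e : b * a * (b ^ m * a ^ n) = b * (a * b ^ m) * a ^ n := by noncomm_ring
    rw [e, key1 a b hab m, mul_add, add_mul, mul_smul_comm, smul_mul_assoc]
    have c1 : b * (b ^ m * a) * a ^ n = T1 := by
      rw [hT1]; simp only [pow_succ' b, pow_succ' a, mul_assoc]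
    have c2 : (m:ℂ) • (b * b ^ (m-1) * a ^ n) = (m:ℂ) • T2 := by
      cases m with
      | zero => simp
      | succ j =>
        rw [hT2]; congr 1
        rw [Nat.succ_sub_one]; simp only [pow_succ' b, mul_assoc]
    rw [c1, c2]
  have h3 : (b ^ m * a ^ n) * (b * a) = T1 + (n:ℂ) • T2 := by
    have e : (b ^ m * a ^ n) * (b * a) = b ^ m * (a ^ n * b) * a := by noncomm_ring
    rw [e, key2 a b hab n, mul_add, add_mul, mul_smul_comm, smul_mul_assoc]
    have c1 : b ^ m * (b * a ^ n) * a = T1 := by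
      rw [hT1]; simp only [pow_succ, mul_assoc]
    have c2 : (n:ℂ) • (b ^ m * a ^ (n-1) * a) = (n:ℂ) • T2 := by
      cases n with
      | zero => simp
      | succ j =>
        rw [hT2]; congr 1
        rw [Nat.succ_sub_one]; simp only [pow_succ a, mul_assoc]
    rw [c1, c2]
  have h5 : a * b * (b ^ m * a ^ n) = T1 + ((m:ℂ) + 1) • T2 := by
    rw [hab', add_mul, one_mul, h2, hT2, add_smul, one_smul]
    abel
  have h6 : (b ^ m * a ^ n) * (a * b) = T1 + ((n:ℂ) + 1) • T2 := by
    rw [hab', mul_add, mul_one, h3, hT2, add_smul, one_smul]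
    abel
  have h4 : a * (b ^ m * a ^ n) * b = T1 + ((m:ℂ) + (n:ℂ) + 1) • T2 + ((m:ℂ) * n) • T3 := by
    have e : a * (b ^ m * a ^ n) * b = (a * b ^ m) * (a ^ n * b) := by noncomm_ring
    rw [e, key1 a b hab m, key2 a b hab n]
    rw [add_mul, mul_add, mul_add, smul_mul_assoc, smul_mul_assoc, mul_smul_comm,
      mul_smul_comm, smul_smul]
    have e1 : b ^ m * a * (b * a ^ n) = T1 + T2 := by
      have e' : b ^ m * a * (b * a ^ n) = b ^ m * (a * b) * a ^ n := by noncomm_ring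
      rw [e', hab', mul_add, mul_one, add_mul, hT1, hT2]
      congr 1
      simp only [pow_succ b, pow_succ' a, mul_assoc]
    have e2 : (n:ℂ) • (b ^ m * a * a ^ (n-1)) = (n:ℂ) • T2 := by
      cases n with
      | zero => simp
      | succ j =>
        rw [hT2]; congr 1
        rw [Nat.succ_sub_one]; simp only [pow_succ' a, mul_assoc]
    have e3 : (m:ℂ) • (b ^ (m-1) * (b * a ^ n)) = (m:ℂ) • T2 := by
      cases m with
      | zero => simp
      | succ j =>
        rw [hT2]; congr 1
        rw [Nat.succ_sub_one]; simp only [pow_succ b, mul_assoc]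
    rw [e1, e2, e3, ← hT3, add_smul, add_smul, one_smul]
    abel
  rw [hD, h1, h2, h3, h4, h5, h6]
  module
end
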